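/- For the algebra F_n^2, the space of 2-coboundaries BL^2(F_n^2, V) has basis θ_{1,j}(e_1,e_1)=x_j and θ_{i,j}(e_{i+1},e_1)=x_j for 2 ≤ i ≤ n-2, 1 ≤ j ≤ k; hence dim HL^2(F_n^2, V) = 4k. -/

import Mathlib

/-- Multiplication of the algebra `F_n^2`: `[e_1,e_1] = e_3`,
`[e_i,e_1] = e_{i+1}` for `3 ≤ i ≤ n-1`, other products zero. -/
def F2mul (n : ℕ) (x y : Fin n → ℂ) : Fin n → ℂ :=
  fun k =>
    if h : (k : ℕ) = 2 then
      x ⟨0, by have := k.isLt; omega⟩ * y ⟨0, by have := k.isLt; omega⟩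
    else if h2 : 3 ≤ (k : ℕ) then
      x ⟨(k : ℕ) - 1, by have := k.isLt; omega⟩ * y ⟨0, by have := k.isLt; omega⟩
    else 0

section
variable {n : ℕ}

lemma F2mul_single_zero_zero (hn : 4 ≤ n) :
    F2mul n (Pi.single (⟨0, (by omega : 1 ≤ n)⟩ : Fin n) (1:ℂ))
        (Pi.single (⟨0, (by omega : 1 ≤ n)⟩ : Fin n) 1)
      = Pi.single (⟨2, by omega⟩ : Fin n) 1 := by
  funext m
  simp only [F2mul, Pi.single_apply, Fin.ext_iff]
  split_ifs <;> simp_all <;> omega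

lemma F2mul_single_mid (hn : 4 ≤ n) (i : Fin n) (h2 : 2 ≤ (i:ℕ)) (h3 : (i:ℕ) ≤ n - 2) :
    F2mul n (Pi.single i (1:ℂ)) (Pi.single (⟨0, by omega⟩ : Fin n) 1)
      = Pi.single (⟨(i:ℕ)+1, by omega⟩ : Fin n) 1 := by
  funext m
  simp only [F2mul, Pi.single_apply, Fin.ext_iff]
  split_ifs <;> simp_all <;> omega

lemma F2mul_single_zero (hn : 4 ≤ n) (i j : Fin n)
    (h : ¬((j : ℕ) = 0 ∧ ((i : ℕ) = 0 ∨ (2 ≤ (i : ℕ) ∧ (i : ℕ) ≤ n - 2)))) :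
    F2mul n (Pi.single i (1:ℂ)) (Pi.single j 1) = 0 := by
  funext m
  simp only [F2mul, Pi.single_apply, Fin.ext_iff]
  push_neg at h
  split_ifs <;> simp_all <;> omega
end

section
variable {n k : ℕ}

lemma theta_expand (θ : (Fin n → ℂ) →ₗ[ℂ] (Fin n → ℂ) →ₗ[ℂ] (Fin k → ℂ)) (x y : Fin n → ℂ) :
    θ x y = ∑ i : Fin n, ∑ j : Fin n,
      (x i * y j) • θ (Pi.single i 1) (Pi.single j 1) := by
  conv_lhs => rw [← (Pi.basisFun ℂ (Fin n)).sum_repr x, ← (Pi.basisFun ℂ (Fin n)).sum_repr y]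
  simp [map_sum, Finset.sum_apply, map_smul, Pi.basisFun_apply, Pi.basisFun_repr,
    smul_smul, Finset.smul_sum]
  rw [Finset.sum_comm]
  simp [mul_comm]

noncomputable def phiOf (g : Fin n → Fin k → ℂ) : (Fin n → ℂ) →ₗ[ℂ] (Fin k → ℂ) where
  toFun x := ∑ m, x m • g m
  map_add' x y := by simp [add_smul, Finset.sum_add_distrib]
  map_smul' a x := by simp [smul_smul, Finset.smul_sum]

lemma phiOf_single (g : Fin n → Fin k → ℂ) (m : Fin n) :
    phiOf g (Pi.single m (1:ℂ)) = g m := by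
  simp only [phiOf, LinearMap.coe_mk, AddHom.coe_mk]
  rw [Finset.sum_eq_single m] <;> simp (config := {contextual := true}) [Pi.single_apply]
end
noncomputable def F2mulL (n : ℕ) : (Fin n → ℂ) →ₗ[ℂ] (Fin n → ℂ) →ₗ[ℂ] (Fin n → ℂ) :=
  LinearMap.mk₂ ℂ (F2mul n)
    (by intro x x' y; funext m; simp only [F2mul, Pi.add_apply]; split_ifs <;> ring)
    (by intro a x y; funext m; simp only [F2mul, Pi.smul_apply, smul_eq_mul]; split_ifs <;> ring)
    (by intro x y y'; funext m; simp only [F2mul, Pi.add_apply]; split_ifs <;> ring)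
    (by intro a x y; funext m; simp only [F2mul, Pi.smul_apply, smul_eq_mul]; split_ifs <;> ring)

@[simp] lemma F2mulL_apply (n : ℕ) (x y : Fin n → ℂ) : F2mulL n x y = F2mul n x y := rfl

section
variable {n k : ℕ}

lemma part1 (hn : 4 ≤ n) (θ : (Fin n → ℂ) →ₗ[ℂ] (Fin n → ℂ) →ₗ[ℂ] (Fin k → ℂ)) :
    (∃ φ : (Fin n → ℂ) →ₗ[ℂ] (Fin k → ℂ), ∀ x y, θ x y = φ (F2mul n x y)) ↔
      (∀ i j : Fin n,
        ¬((j : ℕ) = 0 ∧ ((i : ℕ) = 0 ∨ (2 ≤ (i : ℕ) ∧ (i : ℕ) ≤ n - 2))) →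
        θ (Pi.single i (1 : ℂ)) (Pi.single j (1 : ℂ)) = 0) := by
  constructor
  · rintro ⟨φ, hφ⟩ i j hij
    rw [hφ, F2mul_single_zero hn i j hij, map_zero]
  · intro h
    set g : Fin n → Fin k → ℂ := fun m =>
      if (m : ℕ) = 2 then
        θ (Pi.single (⟨0, by omega⟩ : Fin n) 1) (Pi.single (⟨0, by omega⟩ : Fin n) 1)
      else if 3 ≤ (m : ℕ) then
        θ (Pi.single (⟨(m : ℕ) - 1, by have := m.isLt; omega⟩ : Fin n) 1)
          (Pi.single (⟨0, by omega⟩ : Fin n) 1)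
      else 0 with hg
    refine ⟨phiOf g, fun x y => ?_⟩
    have key : ∀ i j : Fin n, θ (Pi.single i 1) (Pi.single j 1)
        = phiOf g (F2mul n (Pi.single i 1) (Pi.single j 1)) := by
      intro i j
      by_cases hc : (j : ℕ) = 0 ∧ ((i : ℕ) = 0 ∨ (2 ≤ (i : ℕ) ∧ (i : ℕ) ≤ n - 2))
      · obtain ⟨hj, hi⟩ := hc
        have hj' : j = ⟨0, by omega⟩ := Fin.ext hj
        rcases hi with hi | ⟨hi1, hi2⟩
        · have hi' : i = ⟨0, by omega⟩ := Fin.ext hi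
          rw [hi', hj', F2mul_single_zero_zero hn, phiOf_single]
          simp only [hg]
          norm_num
        · rw [hj', F2mul_single_mid hn i hi1 hi2, phiOf_single]
          simp only [hg]
          have h2 : ¬((⟨(i:ℕ)+1, by omega⟩ : Fin n) : ℕ) = 2 := by simp; omega
          have h3 : 3 ≤ ((⟨(i:ℕ)+1, by omega⟩ : Fin n) : ℕ) := by simp; omega
          rw [if_neg h2, if_pos h3]
          congr 2
      · rw [F2mul_single_zero hn i j hc, map_zero]
        exact h i j hc
    calc θ x y = ∑ i : Fin n, ∑ j : Fin n, (x i * y j) • θ (Pi.single i 1) (Pi.single j 1) :=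
          theta_expand θ x y
      _ = ∑ i : Fin n, ∑ j : Fin n,
            (x i * y j) • ((F2mulL n).compr₂ (phiOf g)) (Pi.single i 1) (Pi.single j 1) := by
          refine Finset.sum_congr rfl fun i _ => Finset.sum_congr rfl fun j _ => ?_
          rw [LinearMap.compr₂_apply, F2mulL_apply, key]
      _ = ((F2mulL n).compr₂ (phiOf g)) x y := (theta_expand _ x y).symm
      _ = phiOf g (F2mul n x y) := rfl
end

section
variable {n k : ℕ}

lemma cocycle_high (hn : 4 ≤ n) (θ : (Fin n → ℂ) →ₗ[ℂ] (Fin n → ℂ) →ₗ[ℂ] (Fin k → ℂ))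
    (hθ : ∀ x y z : Fin n → ℂ,
      θ x (F2mul n y z) = θ (F2mul n x y) z - θ (F2mul n x z) y) :
    ∀ m : ℕ, 2 ≤ m → ∀ hm : m < n, ∀ i : Fin n,
      θ (Pi.single i 1) (Pi.single (⟨m, hm⟩ : Fin n) 1) = 0 := by
  intro m hm2
  induction m, hm2 using Nat.le_induction with
  | base =>
    intro hm i
    have := hθ (Pi.single i 1) (Pi.single (⟨0, by omega⟩ : Fin n) 1)
      (Pi.single (⟨0, by omega⟩ : Fin n) 1)
    rw [F2mul_single_zero_zero hn, sub_self] at this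
    convert this using 3
  | succ m hm ih =>
    intro hm' i
    have h1 : 2 ≤ m := hm
    have h2 : m ≤ n - 2 := by omega
    have key := hθ (Pi.single i 1) (Pi.single (⟨m, by omega⟩ : Fin n) 1)
      (Pi.single (⟨0, by omega⟩ : Fin n) 1)
    rw [F2mul_single_mid hn _ (by simpa using h1) (by simpa using h2)] at key
    have hz : F2mul n (Pi.single i 1) (Pi.single (⟨m, by omega⟩ : Fin n) (1:ℂ)) = 0 :=
      F2mul_single_zero hn _ _ (by simp; omega)
    rw [hz, map_zero, LinearMap.zero_apply, zero_sub] at key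
    have hsnd : θ (F2mul n (Pi.single i 1) (Pi.single (⟨0, by omega⟩ : Fin n) 1))
        (Pi.single (⟨m, by omega⟩ : Fin n) 1) = 0 := by
      by_cases hc : ((⟨0, by omega⟩ : Fin n) : ℕ) = 0 ∧
          ((i : ℕ) = 0 ∨ (2 ≤ (i : ℕ) ∧ (i : ℕ) ≤ n - 2))
      · rcases hc.2 with hi | ⟨hi1, hi2⟩
        · rw [show i = (⟨0, by omega⟩ : Fin n) from Fin.ext hi, F2mul_single_zero_zero hn]
          exact ih (by omega) _
        · rw [F2mul_single_mid hn i hi1 hi2]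
          exact ih (by omega) _
      · rw [F2mul_single_zero hn _ _ hc, map_zero, LinearMap.zero_apply]
    rw [hsnd, neg_zero] at key
    convert key using 3
end

section
variable {n k : ℕ}

lemma cocycle_one (hn : 4 ≤ n) (θ : (Fin n → ℂ) →ₗ[ℂ] (Fin n → ℂ) →ₗ[ℂ] (Fin k → ℂ))
    (hθ : ∀ x y z : Fin n → ℂ,
      θ x (F2mul n y z) = θ (F2mul n x y) z - θ (F2mul n x z) y)
    (i : Fin n) (hi : 2 ≤ (i : ℕ)) :
    θ (Pi.single i 1) (Pi.single (⟨1, by omega⟩ : Fin n) 1) = 0 := by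
  have hmul01 : F2mul n (Pi.single (⟨0, by omega⟩ : Fin n) (1:ℂ))
      (Pi.single (⟨1, by omega⟩ : Fin n) 1) = 0 :=
    F2mul_single_zero hn _ _ (by simp)
  by_cases h2 : (i : ℕ) = 2
  · have key := hθ (Pi.single (⟨0, by omega⟩ : Fin n) 1) (Pi.single (⟨0, by omega⟩ : Fin n) 1)
      (Pi.single (⟨1, by omega⟩ : Fin n) 1)
    rw [hmul01, map_zero, F2mul_single_zero_zero hn, map_zero, LinearMap.zero_apply,
      sub_zero] at key
    rw [show i = (⟨2, by omega⟩ : Fin n) from Fin.ext h2]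
    exact key.symm
  · have hi3 : 3 ≤ (i : ℕ) := by omega
    have hilt := i.isLt
    have key := hθ (Pi.single (⟨(i:ℕ) - 1, by omega⟩ : Fin n) 1)
      (Pi.single (⟨0, by omega⟩ : Fin n) 1) (Pi.single (⟨1, by omega⟩ : Fin n) 1)
    rw [hmul01, map_zero,
      F2mul_single_mid hn (⟨(i:ℕ) - 1, by omega⟩ : Fin n) (by simp; omega) (by simp; omega),
      F2mul_single_zero hn (⟨(i:ℕ) - 1, by omega⟩ : Fin n) (⟨1, by omega⟩ : Fin n)
        (by simp)] at key
    rw [map_zero, LinearMap.zero_apply, sub_zero] at key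
    have : (⟨(i:ℕ) - 1 + 1, by omega⟩ : Fin n) = i := Fin.ext (by simp; omega)
    rw [this] at key
    exact key.symm
end

section
variable {n k : ℕ}

noncomputable def Tmap (hn : 4 ≤ n) (c : Fin 4 → Fin k → ℂ) :
    (Fin n → ℂ) →ₗ[ℂ] (Fin n → ℂ) →ₗ[ℂ] (Fin k → ℂ) :=
  LinearMap.mk₂ ℂ
    (fun x y =>
      (x ⟨1, (by omega : 2 ≤ n)⟩ * y ⟨0, (by omega : 1 ≤ n)⟩) • c 0 +
      (x ⟨n - 1, (by omega : n - 1 + 1 ≤ n)⟩ * y ⟨0, (by omega : 1 ≤ n)⟩) • c 1 +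
      (x ⟨0, (by omega : 1 ≤ n)⟩ * y ⟨1, (by omega : 2 ≤ n)⟩) • c 2 +
      (x ⟨1, (by omega : 2 ≤ n)⟩ * y ⟨1, (by omega : 2 ≤ n)⟩) • c 3)
    (by intro x x' y; simp only [Pi.add_apply, add_mul, add_smul]; abel)
    (by intro a x y; simp only [Pi.smul_apply, smul_eq_mul, mul_assoc, smul_smul, smul_add])
    (by intro x y y'; simp only [Pi.add_apply, mul_add, add_smul]; abel)
    (by intro a x y; simp only [Pi.smul_apply, smul_eq_mul, smul_smul, smul_add]
        ring_nf)

@[simp] lemma single_mk (a : Fin n) (m : ℕ) (h : m < n) :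
    (Pi.single a (1:ℂ) : Fin n → ℂ) ⟨m, h⟩ = if (a : ℕ) = m then 1 else 0 := by
  rw [Pi.single_apply]
  simp [Fin.ext_iff, eq_comm]
end

section
variable {n k : ℕ}

lemma Tmap_single (hn : 4 ≤ n) (c : Fin 4 → Fin k → ℂ) (i j : Fin n) :
    Tmap hn c (Pi.single i 1) (Pi.single j 1) =
      (if (i:ℕ) = 1 ∧ (j:ℕ) = 0 then c 0 else 0) +
      (if (i:ℕ) = n - 1 ∧ (j:ℕ) = 0 then c 1 else 0) +
      (if (i:ℕ) = 0 ∧ (j:ℕ) = 1 then c 2 else 0) +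
      (if (i:ℕ) = 1 ∧ (j:ℕ) = 1 then c 3 else 0) := by
  simp only [Tmap, LinearMap.mk₂_apply, single_mk, ite_mul, mul_ite, mul_one, mul_zero,
    ite_smul, zero_smul, one_smul, ← ite_and]
  simp only [and_comm (a := (j:ℕ) = 0), and_comm (a := (j:ℕ) = 1)]

lemma part2 (hn : 4 ≤ n) (θ : (Fin n → ℂ) →ₗ[ℂ] (Fin n → ℂ) →ₗ[ℂ] (Fin k → ℂ))
    (hθ : ∀ x y z : Fin n → ℂ,
      θ x (F2mul n y z) = θ (F2mul n x y) z - θ (F2mul n x z) y) :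
    ∃! c : Fin 4 → Fin k → ℂ, ∃ φ : (Fin n → ℂ) →ₗ[ℂ] (Fin k → ℂ),
      ∀ x y : Fin n → ℂ,
        θ x y -
          ((x ⟨1, (by omega : 2 ≤ n)⟩ * y ⟨0, (by omega : 1 ≤ n)⟩) • c 0 +
           (x ⟨n - 1, (by omega : n - 1 + 1 ≤ n)⟩ * y ⟨0, (by omega : 1 ≤ n)⟩) • c 1 +
           (x ⟨0, (by omega : 1 ≤ n)⟩ * y ⟨1, (by omega : 2 ≤ n)⟩) • c 2 +
           (x ⟨1, (by omega : 2 ≤ n)⟩ * y ⟨1, (by omega : 2 ≤ n)⟩) • c 3) = φ (F2mul n x y) := by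
  classical
  set c : Fin 4 → Fin k → ℂ := ![
    θ (Pi.single (⟨1, by omega⟩ : Fin n) 1) (Pi.single (⟨0, by omega⟩ : Fin n) 1),
    θ (Pi.single (⟨n - 1, by omega⟩ : Fin n) 1) (Pi.single (⟨0, by omega⟩ : Fin n) 1),
    θ (Pi.single (⟨0, by omega⟩ : Fin n) 1) (Pi.single (⟨1, by omega⟩ : Fin n) 1),
    θ (Pi.single (⟨1, by omega⟩ : Fin n) 1) (Pi.single (⟨1, by omega⟩ : Fin n) 1)] with hc
  have vanish : ∀ i j : Fin n,
      ¬((j : ℕ) = 0 ∧ ((i : ℕ) = 0 ∨ (2 ≤ (i : ℕ) ∧ (i : ℕ) ≤ n - 2))) →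
      (θ - Tmap hn c) (Pi.single i 1) (Pi.single j 1) = 0 := by
    intro i j hij
    have hilt := i.isLt
    have hjlt := j.isLt
    simp only [LinearMap.sub_apply, Tmap_single]
    by_cases hj0 : (j : ℕ) = 0
    · have hi : (i : ℕ) = 1 ∨ (i : ℕ) = n - 1 := by
        by_contra hcon
        push_neg at hcon
        exact hij ⟨hj0, by omega⟩
      rw [show j = (⟨0, by omega⟩ : Fin n) from Fin.ext hj0]
      rcases hi with hi | hi
      · rw [show i = (⟨1, by omega⟩ : Fin n) from Fin.ext hi]
        simp [hc, show ¬(1 = n - 1) from by omega]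
      · rw [show i = (⟨n - 1, by omega⟩ : Fin n) from Fin.ext hi]
        simp [hc, show ¬(n - 1 = 1) from by omega, show ¬(n - 1 = 0) from by omega]
    · by_cases hj1 : (j : ℕ) = 1
      · rw [show j = (⟨1, by omega⟩ : Fin n) from Fin.ext hj1]
        by_cases hi0 : (i : ℕ) = 0
        · rw [show i = (⟨0, by omega⟩ : Fin n) from Fin.ext hi0]
          simp [hc, show ¬(0 = n - 1) from by omega]
        · by_cases hi1 : (i : ℕ) = 1
          · rw [show i = (⟨1, by omega⟩ : Fin n) from Fin.ext hi1]
            simp [hc, show ¬(1 = n - 1) from by omega]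
          · have h2 : 2 ≤ (i : ℕ) := by omega
            have := cocycle_one hn θ hθ i h2
            simp only [hi0, hi1, and_true, and_false, if_false, add_zero, if_neg,
              not_and, not_false_iff]
            simp [hi0, hi1, this, show ¬((i:ℕ) = 1) from hi1, show ¬((i:ℕ) = 0) from hi0]
      · have hj2 : 2 ≤ (j : ℕ) := by omega
        have := cocycle_high hn θ hθ (j : ℕ) hj2 j.isLt i
        simp only [Fin.eta] at this
        simp [this, hj0, hj1]
  obtain ⟨φ, hφ⟩ := (part1 hn (θ - Tmap hn c)).mpr vanish
  refine ⟨c, ⟨φ, fun x y => ?_⟩, ?_⟩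
  · have h := hφ x y
    simp only [LinearMap.sub_apply] at h
    exact h
  · rintro c' ⟨φ', hφ'⟩
    have e0 := hφ' (Pi.single (⟨1, by omega⟩ : Fin n) 1) (Pi.single (⟨0, by omega⟩ : Fin n) 1)
    rw [F2mul_single_zero hn _ _ (by norm_num), map_zero, sub_eq_zero] at e0
    have hb1 : ¬(1 = n - 1) := by omega
    have hb2 : ¬(n - 1 = 1) := by omega
    have hb3 : ¬(n - 1 = 0) := by omega
    have e1 := hφ' (Pi.single (⟨n - 1, by omega⟩ : Fin n) 1)
      (Pi.single (⟨0, by omega⟩ : Fin n) 1)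
    rw [F2mul_single_zero hn _ _ (by simp <;> omega), map_zero, sub_eq_zero] at e1
    have e2 := hφ' (Pi.single (⟨0, by omega⟩ : Fin n) 1) (Pi.single (⟨1, by omega⟩ : Fin n) 1)
    rw [F2mul_single_zero hn _ _ (by norm_num), map_zero, sub_eq_zero] at e2
    have e3 := hφ' (Pi.single (⟨1, by omega⟩ : Fin n) 1) (Pi.single (⟨1, by omega⟩ : Fin n) 1)
    rw [F2mul_single_zero hn _ _ (by norm_num), map_zero, sub_eq_zero] at e3
    simp only [single_mk, hb1, hb2, hb3] at e0 e1 e2 e3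
    simp only [if_true, if_false, ite_true, ite_false, reduceIte, one_mul, mul_one, zero_mul,
      mul_zero, one_smul, zero_smul, add_zero, zero_add] at e0 e1 e2 e3
    funext t
    fin_cases t
    · simpa [hc] using e0.symm
    · simpa [hc] using e1.symm
    · simpa [hc] using e2.symm
    · simpa [hc] using e3.symm
end

/-- `BL^2(F_n^2,V)` consists exactly of the bilinear maps supported on the
pairs `(e_1,e_1)` and `(e_{i+1},e_1)`, `2 ≤ i ≤ n-2` (basis
`θ_{1,j}(e_1,e_1)=x_j`, `θ_{i,j}(e_{i+1},e_1)=x_j`); hence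
`dim HL^2(F_n^2,V) = 4k`: every cocycle is congruent modulo coboundaries to
a unique combination of the `4k` cocycles `(e_2,e_1), (e_n,e_1), (e_1,e_2),
(e_2,e_2) ↦ x_j`. -/
theorem F2_coboundaries_and_HL2 (n k : ℕ) (hn : 4 ≤ n) :
    (∀ θ : (Fin n → ℂ) →ₗ[ℂ] (Fin n → ℂ) →ₗ[ℂ] (Fin k → ℂ),
      (∃ φ : (Fin n → ℂ) →ₗ[ℂ] (Fin k → ℂ), ∀ x y, θ x y = φ (F2mul n x y)) ↔
        (∀ i j : Fin n,
          ¬((j : ℕ) = 0 ∧ ((i : ℕ) = 0 ∨ (2 ≤ (i : ℕ) ∧ (i : ℕ) ≤ n - 2))) →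
          θ (Pi.single i (1 : ℂ)) (Pi.single j (1 : ℂ)) = 0)) ∧
    (∀ θ : (Fin n → ℂ) →ₗ[ℂ] (Fin n → ℂ) →ₗ[ℂ] (Fin k → ℂ),
      (∀ x y z : Fin n → ℂ,
          θ x (F2mul n y z) = θ (F2mul n x y) z - θ (F2mul n x z) y) →
      ∃! c : Fin 4 → Fin k → ℂ, ∃ φ : (Fin n → ℂ) →ₗ[ℂ] (Fin k → ℂ),
        ∀ x y : Fin n → ℂ,
          θ x y -
            ((x ⟨1, by omega⟩ * y ⟨0, by omega⟩) • c 0 +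
             (x ⟨n - 1, by omega⟩ * y ⟨0, by omega⟩) • c 1 +
             (x ⟨0, by omega⟩ * y ⟨1, by omega⟩) • c 2 +
             (x ⟨1, by omega⟩ * y ⟨1, by omega⟩) • c 3) = φ (F2mul n x y)) :=
  ⟨fun θ => part1 hn θ, fun θ hθ => part2 hn θ hθ⟩
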